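/- Let k ≥ 2 and let {t_n} be the 2k-nacci sequence. Then for all m ≥ 1, t_{m(2k+1)} ≡ 1 + (−1)^{m+1}·4m(k−1) + (−1)^{m+1} (mod 2^{2ν_2(k−1)+5}), where ν_2 denotes the 2-adic valuation. -/

import Mathlib

def FF (N : ℕ) (n : ℕ) : ℤ :=
  if h : n < N ∨ N = 0 then 2 ^ n
  else 2 * FF N (n - 1) - FF N (n - N)
termination_by n
decreasing_by all_goals omega

lemma FF_base {N n : ℕ} (h : n < N) : FF N n = 2 ^ n := by
  rw [FF]; simp [h]

lemma FF_rec {N n : ℕ} (hN : N ≠ 0) (hn : N ≤ n) :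
    FF N n = 2 * FF N (n - 1) - FF N (n - N) := by
  rw [FF]; rw [dif_neg (by omega)]

lemma FF_mod (N : ℕ) (hN : 1 ≤ N) :
    ∀ q r, r < N → (2 ^ N : ℤ) ∣ FF N (q * N + r) - (-1) ^ q * ((q + r).choose r) * 2 ^ r := by
  intro q
  induction q with
  | zero =>
    intro r hr
    simp [FF_base hr, Nat.choose_self]
  | succ q ih =>
    have hp : (2:ℤ) ^ N = 2 * 2 ^ (N - 1) := by
      rw [← pow_succ']; congr 1; omega
    have key : ∀ r, r < N →
        (2 ^ N : ℤ) ∣ FF N (q * N + N + r) - (-1) ^ (q+1) * (((q+1) + r).choose r) * 2 ^ r := by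
      intro r
      induction r with
      | zero =>
        intro _
        obtain ⟨a, ha⟩ := ih (N - 1) (by omega)
        obtain ⟨b, hb⟩ := ih 0 hN
        have i1 : q * N + N + 0 - 1 = q * N + (N - 1) := by omega
        have i2 : q * N + N + 0 - N = q * N + 0 := by omega
        have e1 : FF N (q * N + N + 0) = 2 * FF N (q * N + (N - 1)) - FF N (q * N + 0) := by
          rw [FF_rec (by omega) (by omega), i1, i2]
        refine ⟨(-1) ^ q * ((q + (N-1)).choose (N-1) : ℤ) + 2 * a - b, ?_⟩
        rw [e1]
        simp only [Nat.choose_zero_right, Nat.cast_one] at hb ⊢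
        linear_combination 2 * ha - hb - (-1:ℤ) ^ q * ((q + (N-1)).choose (N-1) : ℤ) * hp
      | succ r ihr =>
        intro hr
        obtain ⟨a, ha⟩ := ihr (by omega)
        obtain ⟨b, hb⟩ := ih (r+1) hr
        have i1 : q * N + N + (r+1) - 1 = q * N + N + r := by omega
        have i2 : q * N + N + (r+1) - N = q * N + (r+1) := by omega
        have e1 : FF N (q * N + N + (r+1)) = 2 * FF N (q * N + N + r) - FF N (q * N + (r+1)) := by
          rw [FF_rec (by omega) (by omega), i1, i2]
        have hC : ((q+1) + (r+1)).choose (r+1) = ((q+1) + r).choose r + (q + (r+1)).choose (r+1) := by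
          rw [show (q+1) + (r+1) = (q+r+1)+1 by omega, show (q+1) + r = q+r+1 by omega,
            show q + (r+1) = q+r+1 by omega]
          exact Nat.choose_succ_succ _ _
        refine ⟨2 * a - b, ?_⟩
        rw [e1, hC]
        push_cast
        linear_combination 2 * ha - hb
    intro r hr
    have e : (q+1) * N + r = q * N + N + r := by ring
    rw [e]; exact key r hr
def SS (m R : ℕ) : ℤ := ∑ r ∈ Finset.range (R+1), ((m+r).choose r : ℤ) * 2 ^ r

lemma SS_rec (m R : ℕ) : SS (m+1) (R+1) = SS m (R+1) + 2 * SS (m+1) R := by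
  unfold SS
  rw [Finset.sum_range_succ' (fun r => ((m+1+r).choose r : ℤ) * 2 ^ r) (R+1),
      Finset.sum_range_succ' (fun r => ((m+r).choose r : ℤ) * 2 ^ r) (R+1)]
  have h : ∀ i : ℕ, ((m+1+(i+1)).choose (i+1) : ℤ) * 2 ^ (i+1)
      = ((m+(i+1)).choose (i+1) : ℤ) * 2 ^ (i+1) + 2 * (((m+1+i).choose i : ℤ) * 2 ^ i) := by
    intro i
    have hc : (m+1+(i+1)).choose (i+1) = (m+i+1).choose i + (m+i+1).choose (i+1) := by
      rw [show m+1+(i+1) = (m+i+1)+1 by omega]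
      exact Nat.choose_succ_succ _ _
    rw [hc, show m+1+i = m+i+1 by omega, show m+(i+1) = m+i+1 by omega]
    push_cast; ring
  rw [Finset.sum_congr rfl (fun i _ => h i), Finset.sum_add_distrib]
  simp [Finset.mul_sum]
  ring

lemma SS_mod : ∀ R m : ℕ, (2 ^ (R+1) : ℤ) ∣ SS m R - (-1) ^ (m+1) := by
  intro R
  induction R with
  | zero =>
    intro m
    have h1 : SS m 0 = 1 := by simp [SS]
    rw [h1]
    rcases Nat.even_or_odd m with h | h
    · rw [Odd.neg_one_pow (Even.add_one h)]; norm_num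
    · rw [Even.neg_one_pow (Odd.add_one h)]; norm_num
  | succ R ihR =>
    intro m
    induction m with
    | zero =>
      have h1 : SS 0 (R+1) = 2 ^ (R+2) - 1 := by
        unfold SS
        rw [Finset.sum_congr rfl (fun r _ => by simp [Nat.choose_self] :
          ∀ r ∈ Finset.range (R+1+1), ((0+r).choose r : ℤ) * 2 ^ r = 2 ^ r)]
        have := geom_sum_mul (2:ℤ) (R+2)
        norm_num at this
        rw [show R+1+1 = R+2 by omega, this]
      rw [h1]
      exact ⟨1, by ring⟩
    | succ m ihm =>
      obtain ⟨A, hA⟩ := ihm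
      obtain ⟨B, hB⟩ := ihR (m+1)
      exact ⟨A + B, by rw [SS_rec]; linear_combination hA + 2 * hB⟩
lemma Gstep {N i n : ℕ} (hiN : i < N) (hn : N ≤ n) :
    (if i ≤ n then FF N (n - i) else 0)
      = 2 * (if i ≤ n - 1 then FF N (n - 1 - i) else 0)
        - (if i ≤ n - N then FF N (n - N - i) else 0) := by
  rw [if_pos (by omega), if_pos (by omega)]
  by_cases h : i ≤ n - N
  · rw [if_pos h, FF_rec (by omega) (by omega),
      show n - i - 1 = n - 1 - i by omega, show n - i - N = n - N - i by omega]
  · rw [if_neg h, FF_base (by omega : n - i < N), FF_base (by omega : n - 1 - i < N),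
      show n - i = (n - 1 - i) + 1 by omega, pow_succ]
    ring

lemma geo (n : ℕ) : ∑ j ∈ Finset.range n, (2:ℤ) ^ j = 2 ^ n - 1 := by
  have := geom_sum_mul (2:ℤ) n
  linarith

lemma t_eq (k : ℕ) (hk : 2 ≤ k) (t : ℕ → ℕ) (h0 : t 0 = 0)
    (h1 : ∀ n, 1 ≤ n → n ≤ 2 * k - 1 → t n = 1)
    (hrec : ∀ n, 2 * k ≤ n → t n = ∑ i ∈ Finset.Icc 1 (2 * k), t (n - i)) :
    ∀ n, (t n : ℤ)
      = (if 1 ≤ n then FF (2*k+1) (n - 1) else 0)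
        - (∑ i ∈ Finset.Icc 2 (2*k-1), if i ≤ n then FF (2*k+1) (n - i) else 0)
        + (2*(k:ℤ) - 3) * (if 2*k ≤ n then FF (2*k+1) (n - 2*k) else 0) := by
  intro n
  induction n using Nat.strong_induction_on with
  | _ n ih =>
  by_cases hA : n = 0
  · subst hA
    rw [Finset.sum_congr rfl (fun i hi => if_neg (by
      have := Finset.mem_Icc.mp hi; omega)), if_neg (by omega), if_neg (by omega),
      Finset.sum_const_zero, h0]
    norm_num
  by_cases hB : n ≤ 2*k - 1
  · -- 1 ≤ n ≤ 2k-1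
    rw [h1 n (by omega) hB, if_pos (by omega), if_neg (by omega), FF_base (by omega)]
    have hs : (∑ i ∈ Finset.Icc 2 (2*k-1), if i ≤ n then FF (2*k+1) (n - i) else 0)
        = ∑ j ∈ Finset.range (n-1), (2:ℤ) ^ j := by
      rw [← Finset.sum_filter]
      refine Finset.sum_nbij' (fun i => n - i) (fun j => n - j) ?_ ?_ ?_ ?_ ?_ <;>
        intro a ha <;>
        simp only [Finset.mem_filter, Finset.mem_Icc, Finset.mem_range] at ha ⊢
      · omega
      · omega
      · omega
      · omega
      · rw [FF_base (by omega)]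
    rw [hs, geo]
    ring
  by_cases hC : n = 2*k
  · subst hC
    have ht : t (2*k) = 2*k - 1 := by
      have hIns : Finset.Icc 1 (2*k) = insert (2*k) (Finset.Icc 1 (2*k-1)) := by
        ext x; simp only [Finset.mem_Icc, Finset.mem_insert]; omega
      rw [hrec (2*k) le_rfl, hIns,
        Finset.sum_insert (by simp only [Finset.mem_Icc, not_and, not_le]; omega),
        show 2*k - 2*k = 0 by omega, h0,
        Finset.sum_congr rfl (fun i hi => h1 (2*k - i)
          (by have := Finset.mem_Icc.mp hi; omega) (by have := Finset.mem_Icc.mp hi; omega)),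
        Finset.sum_const, Nat.card_Icc]
      simp
    rw [ht, if_pos (by omega), if_pos le_rfl, FF_base (by omega),
      show 2*k - 2*k = 0 by omega, FF_base (by omega)]
    have hs : (∑ i ∈ Finset.Icc 2 (2*k-1), if i ≤ 2*k then FF (2*k+1) (2*k - i) else 0)
        = ∑ j ∈ Finset.range (2*k-2), (2:ℤ) ^ (j+1) := by
      refine Finset.sum_nbij' (fun i => 2*k - 1 - i) (fun j => 2*k - 1 - j) ?_ ?_ ?_ ?_ ?_ <;>
        intro a ha <;>
        simp only [Finset.mem_Icc, Finset.mem_range] at ha ⊢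
      · omega
      · omega
      · omega
      · omega
      · rw [if_pos (by omega), FF_base (by omega), show 2*k - a = (2*k - 1 - a) + 1 by omega]
    have hs2 : ∑ j ∈ Finset.range (2*k-2), (2:ℤ) ^ (j+1)
        = 2 * (2 ^ (2*k-2) - 1) := by
      simp only [pow_succ, ← Finset.sum_mul, geo]; ring
    rw [hs, hs2, show 2*k - 1 = (2*k-2) + 1 by omega, pow_succ]
    push_cast
    ring_nf
    omega
  · -- n ≥ 2k+1
    have hn : 2*k + 1 ≤ n := by omega
    have h3 : Finset.Icc 1 (2*k) = insert 1 (Finset.Icc 2 (2*k)) := by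
      ext x; simp only [Finset.mem_Icc, Finset.mem_insert]; omega
    have h4 : Finset.Icc 2 (2*k+1) = insert (2*k+1) (Finset.Icc 2 (2*k)) := by
      ext x; simp only [Finset.mem_Icc, Finset.mem_insert]; omega
    have h2 : ∑ i ∈ Finset.Icc 1 (2*k), t (n-1-i) = ∑ j ∈ Finset.Icc 2 (2*k+1), t (n-j) := by
      refine Finset.sum_nbij' (fun i => i+1) (fun j => j-1) ?_ ?_ ?_ ?_ ?_ <;>
        intro a ha <;>
        simp only [Finset.mem_Icc] at ha ⊢
      · omega
      · omega
      · omega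
      · omega
      · rw [show n - 1 - a = n - (a+1) by omega]
    have hS1 : t n = t (n-1) + ∑ i ∈ Finset.Icc 2 (2*k), t (n-i) := by
      rw [hrec n (by omega), h3,
        Finset.sum_insert (by simp only [Finset.mem_Icc, not_and, not_le]; omega)]
    have hS2 : t (n-1) = t (n-(2*k+1)) + ∑ i ∈ Finset.Icc 2 (2*k), t (n-i) := by
      rw [hrec (n-1) (by omega), h2, h4,
        Finset.sum_insert (by simp only [Finset.mem_Icc, not_and, not_le]; omega)]
    have hrecn : (t n : ℤ) = 2 * (t (n-1) : ℤ) - (t (n - (2*k+1)) : ℤ) := by omega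
    have ihn1 := ih (n-1) (by omega)
    have ihn2 := ih (n - (2*k+1)) (by omega)
    rw [hrecn, ihn1, ihn2,
      Gstep (N := 2*k+1) (i := 1) (n := n) (by omega) hn,
      Gstep (N := 2*k+1) (i := 2*k) (n := n) (by omega) hn]
    have hsum : (∑ i ∈ Finset.Icc 2 (2*k-1), if i ≤ n then FF (2*k+1) (n - i) else 0)
        = ∑ i ∈ Finset.Icc 2 (2*k-1),
            (2 * (if i ≤ n - 1 then FF (2*k+1) (n - 1 - i) else 0)
              - (if i ≤ n - (2*k+1) then FF (2*k+1) (n - (2*k+1) - i) else 0)) :=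
      Finset.sum_congr rfl (fun i hi =>
        Gstep (by have := Finset.mem_Icc.mp hi; omega) hn)
    rw [hsum, Finset.sum_sub_distrib, ← Finset.mul_sum]
    ring
theorem twoknacci_super_formula (k : ℕ) (hk : 2 ≤ k) (t : ℕ → ℕ)
    (h0 : t 0 = 0)
    (h1 : ∀ n, 1 ≤ n → n ≤ 2 * k - 1 → t n = 1)
    (hrec : ∀ n, 2 * k ≤ n → t n = ∑ i ∈ Finset.Icc 1 (2 * k), t (n - i)) :
    ∀ m : ℕ, 1 ≤ m →
      (t (m * (2 * k + 1)) : ℤ) ≡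
        1 + (-1) ^ (m + 1) * 4 * m * (k - 1) + (-1) ^ (m + 1)
          [ZMOD 2 ^ (2 * padicValNat 2 (k - 1) + 5)] := by
  intro m hm
  obtain ⟨m', rfl⟩ : ∃ m', m = m' + 1 := ⟨m - 1, by omega⟩
  push_cast
  -- modulus comparison
  have hle : 2 * padicValNat 2 (k - 1) + 5 ≤ 2 * k + 1 := by
    have hd := pow_padicValNat_dvd (p := 2) (n := k - 1)
    have h2 : 2 ^ padicValNat 2 (k - 1) ≤ k - 1 := Nat.le_of_dvd (by omega) hd
    have h3 : padicValNat 2 (k - 1) < 2 ^ padicValNat 2 (k - 1) := Nat.lt_two_pow_self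
    omega
  set T := (m' + 1) * (2 * k + 1) with hTdef
  have hT : T = m' * (2 * k + 1) + (2 * k + 1) := by rw [hTdef]; ring
  have hteq := t_eq k hk t h0 h1 hrec T
  rw [if_pos (show 1 ≤ T by omega), if_pos (show 2 * k ≤ T by omega),
    Finset.sum_congr rfl (fun i hi => if_pos (by
      have := Finset.mem_Icc.mp hi; omega))] at hteq
  -- individual congruences
  have hFi : ∀ i, 1 ≤ i → i ≤ 2 * k → (2 ^ (2*k+1) : ℤ) ∣
      FF (2*k+1) (T - i) - (-1) ^ m' * (((m' + (2*k+1-i)).choose (2*k+1-i) : ℤ) * 2 ^ (2*k+1-i)) := by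
    intro i hi1 hi2
    have harg : T - i = m' * (2*k+1) + (2*k+1-i) := by omega
    rw [harg]
    have := FF_mod (2*k+1) (by omega) m' (2*k+1-i) (by omega)
    obtain ⟨c, hc⟩ := this
    exact ⟨c, by linear_combination hc⟩
  have hP : (∑ r ∈ Finset.Icc 2 (2*k-1), ((m'+r).choose r : ℤ) * 2 ^ r)
      = ∑ i ∈ Finset.Icc 2 (2*k-1), ((m' + (2*k+1-i)).choose (2*k+1-i) : ℤ) * 2 ^ (2*k+1-i) := by
    refine Finset.sum_nbij' (fun r => 2*k+1-r) (fun i => 2*k+1-i) ?_ ?_ ?_ ?_ ?_ <;>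
      intro a ha <;> simp only [Finset.mem_Icc] at ha ⊢
    · omega
    · omega
    · omega
    · omega
    · rw [show 2*k+1-(2*k+1-a) = a by omega]
  have hsum : (2 ^ (2*k+1) : ℤ) ∣ (∑ i ∈ Finset.Icc 2 (2*k-1), FF (2*k+1) (T - i))
      - (-1) ^ m' * (∑ r ∈ Finset.Icc 2 (2*k-1), ((m'+r).choose r : ℤ) * 2 ^ r) := by
    rw [hP, Finset.mul_sum, ← Finset.sum_sub_distrib]
    exact Finset.dvd_sum (fun i hi => hFi i (by have := Finset.mem_Icc.mp hi; omega)
      (by have := Finset.mem_Icc.mp hi; omega))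
  have ha1 := hFi 1 le_rfl (by omega)
  rw [show 2*k+1-1 = 2*k by omega] at ha1
  have ha3 := hFi (2*k) (by omega) le_rfl
  rw [show 2*k+1-2*k = 1 by omega, Nat.choose_one_right] at ha3
  -- SS decomposition
  have hrange : Finset.range (2*k+1) = insert 0 (insert 1 (insert (2*k) (Finset.Icc 2 (2*k-1)))) := by
    ext x; simp only [Finset.mem_range, Finset.mem_insert, Finset.mem_Icc]; omega
  have hSS : SS m' (2*k) = 1 + ((m' : ℤ) + 1) * 2
      + (∑ r ∈ Finset.Icc 2 (2*k-1), ((m'+r).choose r : ℤ) * 2 ^ r)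
      + ((m' + 2*k).choose (2*k) : ℤ) * 2 ^ (2*k) := by
    rw [SS, hrange,
      Finset.sum_insert (by simp only [Finset.mem_insert, Finset.mem_Icc]; omega),
      Finset.sum_insert (by simp only [Finset.mem_insert, Finset.mem_Icc]; omega),
      Finset.sum_insert (by simp only [Finset.mem_Icc]; omega)]
    simp only [Nat.choose_one_right, Nat.choose_zero_right, Nat.add_zero, Nat.cast_one,
      pow_zero, pow_one, Nat.cast_add]
    push_cast
    ring
  have ha4 := SS_mod (2*k) m'
  rw [hSS] at ha4
  obtain ⟨a1, ha1⟩ := ha1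
  obtain ⟨a2, ha2⟩ := hsum
  obtain ⟨a3, ha3⟩ := ha3
  obtain ⟨a4, ha4⟩ := ha4
  have hdvd : (2 ^ (2*k+1) : ℤ) ∣ (t T : ℤ) -
      (1 + (-1) ^ (m' + 1 + 1) * 4 * ((m' : ℤ) + 1) * ((k : ℤ) - 1) + (-1) ^ (m' + 1 + 1)) := by
    refine ⟨a1 - a2 + (2*(k:ℤ)-3) * a3 - (-1:ℤ)^m' * a4 + (-1:ℤ)^m' * ((m' + 2*k).choose (2*k) : ℤ), ?_⟩
    rw [hteq]
    push_cast at ha3 ⊢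
    have heven : (-1:ℤ)^(m'*2) = 1 := by rw [mul_comm, pow_mul]; norm_num
    linear_combination ha1 - ha2 + (2*(k:ℤ)-3) * ha3 - (-1:ℤ)^m' * ha4 + heven
  have hfin := (Int.modEq_iff_dvd.mpr hdvd).symm
  exact hfin.of_dvd (pow_dvd_pow 2 hle)
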